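/- arXiv:2207.08721 — 2 statements merged into one kernel-verified Lean document; each statement's English description precedes it below -/
import Mathlib

section
/- Let X, Y ∈ M_n(ℂ) with W(X) ⊂ S_α and W(Y) ⊂ S_α for α ∈ [0, π/2). Then ω(X ∘ Y) ≤ (1 + tan α) ω(X) ω(Y). In particular this improves ω(X ∘ Y) ≤ 2 ω(X) ω(Y) when 0 ≤ α < π/4. -/
open Matrix Complex
open scoped ComplexOrder

/-- Hermitian real part `(X + Xᴴ)/2`. -/
noncomputable def reM {m : ℕ} (X : Matrix (Fin m) (Fin m) ℂ) : Matrix (Fin m) (Fin m) ℂ :=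
  (1 / 2 : ℂ) • (X + Xᴴ)

/-- Hermitian imaginary part `(X - Xᴴ)/(2i)`. -/
noncomputable def imM {m : ℕ} (X : Matrix (Fin m) (Fin m) ℂ) : Matrix (Fin m) (Fin m) ℂ :=
  (-Complex.I / 2) • (X - Xᴴ)

/-- Numerical range `W(X) = {⟨Xx, x⟩ : ‖x‖ = 1}`. -/
noncomputable def numRange {m : ℕ} (X : Matrix (Fin m) (Fin m) ℂ) : Set ℂ :=
  {z | ∃ x : EuclideanSpace ℂ (Fin m), ‖x‖ = 1 ∧ z = star (x : Fin m → ℂ) ⬝ᵥ X.mulVec x}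

/-- Numerical radius `ω(X) = sup {|z| : z ∈ W(X)}`. -/
noncomputable def numRadius {m : ℕ} (X : Matrix (Fin m) (Fin m) ℂ) : ℝ :=
  sSup ((fun z : ℂ => ‖z‖) '' numRange X)

/-- The sector `S_α`. -/
def sector (α : ℝ) : Set ℂ := {z : ℂ | 0 < z.re ∧ |z.im| ≤ Real.tan α * z.re}

/-- Operator norm of a matrix acting on Euclidean space. -/
noncomputable def opNorm {m : ℕ} (X : Matrix (Fin m) (Fin m) ℂ) : ℝ :=
  ‖Matrix.toEuclideanCLM (𝕜 := ℂ) X‖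

set_option maxHeartbeats 1000000

namespace NRaux
variable {n : ℕ}

lemma numRange_eq (X : Matrix (Fin n) (Fin n) ℂ) :
    numRange X = {z | ∃ x : Fin n → ℂ, ∑ i, Complex.normSq (x i) = 1 ∧ z = star x ⬝ᵥ X.mulVec x} := by
  unfold numRange
  ext z
  constructor
  · rintro ⟨x, hx, rfl⟩
    refine ⟨x, ?_, rfl⟩
    have h := EuclideanSpace.norm_eq x
    rw [hx] at h
    have hnn : (0:ℝ) ≤ ∑ j, ‖x j‖ ^ 2 := Finset.sum_nonneg fun j _ => sq_nonneg _
    have h2 : ∑ j, ‖x j‖ ^ 2 = 1 := by nlinarith [Real.sq_sqrt hnn, h.symm]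
    simpa [Complex.normSq_eq_norm_sq] using h2
  · rintro ⟨x, hx, rfl⟩
    refine ⟨WithLp.toLp 2 x, ?_, rfl⟩
    rw [EuclideanSpace.norm_eq]
    have : ∑ j, ‖x j‖ ^ 2 = 1 := by simpa [Complex.normSq_eq_norm_sq] using hx
    rw [this, Real.sqrt_one]

lemma numRadius_nonneg (Y : Matrix (Fin n) (Fin n) ℂ) : 0 ≤ numRadius Y := by
  apply Real.sSup_nonneg
  rintro x ⟨z, -, rfl⟩
  exact norm_nonneg z

lemma coord_abs_le {x : Fin n → ℂ} (hx : ∑ i, Complex.normSq (x i) = 1) (i : Fin n) :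
    ‖x i‖ ≤ 1 := by
  have h1 : Complex.normSq (x i) ≤ 1 := by
    rw [← hx]
    exact Finset.single_le_sum (f := fun j => Complex.normSq (x j))
      (fun j _ => Complex.normSq_nonneg _) (Finset.mem_univ i)
  nlinarith [Complex.sq_norm (x i), norm_nonneg (x i)]

lemma bddAbove_range (Y : Matrix (Fin n) (Fin n) ℂ) :
    BddAbove ((fun z : ℂ => ‖z‖) '' numRange Y) := by
  rw [numRange_eq]
  refine ⟨∑ i, ∑ j, ‖Y i j‖, ?_⟩
  rintro r ⟨z, ⟨x, hx, rfl⟩, rfl⟩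
  calc ‖star x ⬝ᵥ Y.mulVec x‖
      ≤ ∑ i, ‖star x i * Y.mulVec x i‖ := by
        rw [show (star x ⬝ᵥ Y.mulVec x) = ∑ i, star x i * Y.mulVec x i from rfl]
        exact norm_sum_le _ _
    _ ≤ ∑ i, ∑ j, ‖Y i j‖ := by
        refine Finset.sum_le_sum fun i _ => ?_
        rw [norm_mul]
        calc ‖star x i‖ * ‖Y.mulVec x i‖
            ≤ 1 * ‖Y.mulVec x i‖ := by
              apply mul_le_mul_of_nonneg_right _ (norm_nonneg _)
              simpa [Pi.star_apply] using coord_abs_le hx i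
          _ = ‖Y.mulVec x i‖ := one_mul _
          _ ≤ ∑ j, ‖Y i j * x j‖ := by
              rw [show (Y.mulVec x i) = ∑ j, Y i j * x j from rfl]
              exact norm_sum_le _ _
          _ ≤ ∑ j, ‖Y i j‖ := by
              refine Finset.sum_le_sum fun j _ => ?_
              rw [norm_mul]
              calc ‖Y i j‖ * ‖x j‖
                  ≤ ‖Y i j‖ * 1 :=
                    mul_le_mul_of_nonneg_left (coord_abs_le hx j) (norm_nonneg _)
                _ = _ := mul_one _

lemma mem_radius_le {Y : Matrix (Fin n) (Fin n) ℂ} {x : Fin n → ℂ}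
    (hx : ∑ i, Complex.normSq (x i) = 1) :
    ‖star x ⬝ᵥ Y.mulVec x‖ ≤ numRadius Y := by
  apply le_csSup (bddAbove_range Y)
  refine ⟨star x ⬝ᵥ Y.mulVec x, ?_, rfl⟩
  rw [numRange_eq]
  exact ⟨x, hx, rfl⟩

lemma quad_smul (Y : Matrix (Fin n) (Fin n) ℂ) (c : ℂ) (y : Fin n → ℂ) :
    star (c • y) ⬝ᵥ Y.mulVec (c • y) = (starRingEnd ℂ c * c) * (star y ⬝ᵥ Y.mulVec y) := by
  rw [star_smul, Matrix.mulVec_smul, smul_dotProduct, dotProduct_smul]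
  simp [smul_smul, mul_assoc, Complex.star_def]

/-- key subquadratic bound -/
lemma abs_quad_le (Y : Matrix (Fin n) (Fin n) ℂ) (y : Fin n → ℂ) :
    ‖star y ⬝ᵥ Y.mulVec y‖ ≤ numRadius Y * ∑ i, Complex.normSq (y i) := by
  by_cases h0 : ∑ i, Complex.normSq (y i) = 0
  · have hy : y = 0 := by
      funext i
      have : Complex.normSq (y i) = 0 := le_antisymm (h0 ▸ Finset.single_le_sum
        (f := fun j => Complex.normSq (y j)) (fun j _ => Complex.normSq_nonneg _)
        (Finset.mem_univ i)) (Complex.normSq_nonneg _)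
      exact Complex.normSq_eq_zero.mp this
    simp [hy, h0]
  · have hpos : 0 < ∑ i, Complex.normSq (y i) :=
      lt_of_le_of_ne (Finset.sum_nonneg fun i _ => Complex.normSq_nonneg _) (Ne.symm h0)
    set s := ∑ i, Complex.normSq (y i) with hs
    set r := Real.sqrt s with hr
    have hrpos : 0 < r := Real.sqrt_pos.mpr hpos
    set u : Fin n → ℂ := ((r⁻¹ : ℝ) : ℂ) • y with hu
    have hsum : ∑ i, Complex.normSq (u i) = 1 := by
      have : ∀ i, Complex.normSq (u i) = r⁻¹ ^ 2 * Complex.normSq (y i) := by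
        intro i
        simp [hu, Complex.normSq_mul, Complex.normSq_ofReal, sq]
      rw [Finset.sum_congr rfl fun i _ => this i, ← Finset.mul_sum, ← hs,
        inv_pow, Real.sq_sqrt hpos.le, inv_mul_cancel₀ h0]
    have hq := quad_smul Y ((r⁻¹ : ℝ) : ℂ) y
    have hc : (starRingEnd ℂ) ((r⁻¹ : ℝ) : ℂ) * ((r⁻¹ : ℝ) : ℂ) = (((r⁻¹)^2 : ℝ) : ℂ) := by
      simp [Complex.conj_ofReal, sq, Complex.ofReal_mul]
    rw [hc] at hq
    have hrs : (r⁻¹)^2 * s = 1 := by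
      rw [inv_pow, Real.sq_sqrt hpos.le, inv_mul_cancel₀ h0]
    have habs : ‖star u ⬝ᵥ Y.mulVec u‖ = (r⁻¹)^2 * ‖star y ⬝ᵥ Y.mulVec y‖ := by
      rw [hq, norm_mul, Complex.norm_real, Real.norm_of_nonneg (sq_nonneg r⁻¹)]
    have hle := mem_radius_le (Y := Y) hsum
    rw [habs] at hle
    calc ‖star y ⬝ᵥ Y.mulVec y‖
        = s * ((r⁻¹)^2 * ‖star y ⬝ᵥ Y.mulVec y‖) := by
          rw [← mul_assoc, mul_comm s, hrs, one_mul]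
      _ ≤ s * numRadius Y := by
          apply mul_le_mul_of_nonneg_left hle hpos.le
      _ = numRadius Y * s := mul_comm _ _


lemma quad_expand (M : Matrix (Fin n) (Fin n) ℂ) (x : Fin n → ℂ) :
    star x ⬝ᵥ M.mulVec x = ∑ i, ∑ j, star x i * (M i j * x j) :=
  Finset.sum_congr rfl fun i _ => Finset.mul_sum _ _ _

lemma quad_conjTranspose (X : Matrix (Fin n) (Fin n) ℂ) (x : Fin n → ℂ) :
    star x ⬝ᵥ Xᴴ.mulVec x = (starRingEnd ℂ) (star x ⬝ᵥ X.mulVec x) := by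
  rw [quad_expand, quad_expand, map_sum, Finset.sum_comm]
  refine Finset.sum_congr rfl fun j _ => ?_
  rw [map_sum]
  refine Finset.sum_congr rfl fun i _ => ?_
  simp only [Matrix.conjTranspose_apply, Pi.star_apply, Complex.star_def, _root_.map_mul,
    Complex.conj_conj]
  ring

lemma quad_matrix_sum (M : Fin n → Matrix (Fin n) (Fin n) ℂ) (x : Fin n → ℂ) :
    star x ⬝ᵥ (∑ k, M k).mulVec x = ∑ k, star x ⬝ᵥ (M k).mulVec x := by
  simp only [quad_expand, Matrix.sum_apply, Finset.sum_mul, Finset.mul_sum]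
  conv_rhs => rw [Finset.sum_comm]
  exact Finset.sum_congr rfl fun i _ => Finset.sum_comm

lemma quad_vecMulVec (v : Fin n → ℂ) (Y : Matrix (Fin n) (Fin n) ℂ) (x : Fin n → ℂ) :
    star x ⬝ᵥ ((Matrix.vecMulVec (star v) v ⊙ Y).mulVec x)
      = star (v * x) ⬝ᵥ Y.mulVec (v * x) := by
  rw [quad_expand, quad_expand]
  refine Finset.sum_congr rfl fun i _ => Finset.sum_congr rfl fun j _ => ?_
  simp only [Matrix.hadamard_apply, Matrix.vecMulVec_apply, Pi.star_apply, Pi.mul_apply,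
    Complex.star_def, _root_.map_mul]
  ring

lemma gram_eq_sum (B : Matrix (Fin n) (Fin n) ℂ) :
    Bᴴ * B = ∑ k, Matrix.vecMulVec (star (B k)) (B k) := by
  ext i j
  simp [Matrix.mul_apply, Matrix.sum_apply, Matrix.vecMulVec_apply, Matrix.conjTranspose_apply]

lemma hadamard_sum_left (M : Fin n → Matrix (Fin n) (Fin n) ℂ) (Y : Matrix (Fin n) (Fin n) ℂ) :
    (∑ k, M k) ⊙ Y = ∑ k, (M k ⊙ Y) := by
  ext i j
  simp [Matrix.hadamard_apply, Matrix.sum_apply, Finset.sum_mul]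

lemma gram_diag (B : Matrix (Fin n) (Fin n) ℂ) (i : Fin n) :
    ((Bᴴ * B) i i).re = ∑ k, Complex.normSq (B k i) := by
  rw [Matrix.mul_apply, Complex.re_sum]
  refine Finset.sum_congr rfl fun k _ => ?_
  rw [Matrix.conjTranspose_apply, Complex.star_def]
  rw [show ((starRingEnd ℂ) (B k i) * B k i) = ((Complex.normSq (B k i) : ℝ) : ℂ) by
    rw [mul_comm]; exact Complex.mul_conj _]
  simp

/-- Main PSD Hadamard bound. -/
lemma abs_quad_hadamard_le {H : Matrix (Fin n) (Fin n) ℂ} (hH : H.PosSemidef)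
    (Y : Matrix (Fin n) (Fin n) ℂ) (x : Fin n → ℂ) :
    ‖star x ⬝ᵥ ((H ⊙ Y).mulVec x)‖
      ≤ numRadius Y * ∑ i, (H i i).re * Complex.normSq (x i) := by
  open scoped MatrixOrder in
  obtain ⟨B, rfl⟩ := CStarAlgebra.nonneg_iff_eq_star_mul_self.mp hH.nonneg
  rw [Matrix.star_eq_conjTranspose]
  rw [show (Bᴴ * B) ⊙ Y = ∑ k, (Matrix.vecMulVec (star (B k)) (B k) ⊙ Y) by
    rw [← hadamard_sum_left, ← gram_eq_sum]]
  rw [quad_matrix_sum]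
  calc ‖∑ k, star x ⬝ᵥ ((Matrix.vecMulVec (star (B k)) (B k) ⊙ Y).mulVec x)‖
      ≤ ∑ k, ‖star x ⬝ᵥ ((Matrix.vecMulVec (star (B k)) (B k) ⊙ Y).mulVec x)‖ :=
        norm_sum_le _ _
    _ = ∑ k, ‖star (B k * x) ⬝ᵥ Y.mulVec (B k * x)‖ := by
        refine Finset.sum_congr rfl fun k _ => ?_
        rw [quad_vecMulVec]
    _ ≤ ∑ k, numRadius Y * ∑ i, Complex.normSq ((B k * x) i) :=
        Finset.sum_le_sum fun k _ => abs_quad_le Y _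
    _ = numRadius Y * ∑ i, ((Bᴴ * B) i i).re * Complex.normSq (x i) := by
        rw [← Finset.mul_sum]
        congr 1
        rw [Finset.sum_comm]
        refine Finset.sum_congr rfl fun i _ => ?_
        rw [gram_diag, Finset.sum_mul]
        exact Finset.sum_congr rfl fun k _ => by
          simp [Pi.mul_apply, Complex.normSq_mul]

lemma vec_zero_of_normSq {x : Fin n → ℂ} (h0 : ∑ i, Complex.normSq (x i) = 0) : x = 0 := by
  funext i
  have : Complex.normSq (x i) = 0 := le_antisymm (h0 ▸ Finset.single_le_sum
    (f := fun j => Complex.normSq (x j)) (fun j _ => Complex.normSq_nonneg _)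
    (Finset.mem_univ i)) (Complex.normSq_nonneg _)
  exact Complex.normSq_eq_zero.mp this

lemma quad_msmul (c : ℂ) (M : Matrix (Fin n) (Fin n) ℂ) (x : Fin n → ℂ) :
    star x ⬝ᵥ ((c • M).mulVec x) = c * (star x ⬝ᵥ M.mulVec x) := by
  rw [Matrix.smul_mulVec, dotProduct_smul, smul_eq_mul]

lemma quad_madd (M N : Matrix (Fin n) (Fin n) ℂ) (x : Fin n → ℂ) :
    star x ⬝ᵥ ((M + N).mulVec x) = star x ⬝ᵥ M.mulVec x + star x ⬝ᵥ N.mulVec x := by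
  rw [Matrix.add_mulVec, dotProduct_add]

lemma quad_msub (M N : Matrix (Fin n) (Fin n) ℂ) (x : Fin n → ℂ) :
    star x ⬝ᵥ ((M - N).mulVec x) = star x ⬝ᵥ M.mulVec x - star x ⬝ᵥ N.mulVec x := by
  rw [Matrix.sub_mulVec, dotProduct_sub]

lemma quad_reM (X : Matrix (Fin n) (Fin n) ℂ) (x : Fin n → ℂ) :
    star x ⬝ᵥ (reM X).mulVec x = (((star x ⬝ᵥ X.mulVec x).re : ℝ) : ℂ) := by
  rw [reM, quad_msmul, quad_madd, quad_conjTranspose, Complex.add_conj]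
  push_cast
  ring

lemma quad_imM (X : Matrix (Fin n) (Fin n) ℂ) (x : Fin n → ℂ) :
    star x ⬝ᵥ (imM X).mulVec x = (((star x ⬝ᵥ X.mulVec x).im : ℝ) : ℂ) := by
  rw [imM, quad_msmul, quad_msub, quad_conjTranspose, Complex.sub_conj]
  set z := star x ⬝ᵥ X.mulVec x
  push_cast
  linear_combination (-(z.im : ℂ)) * Complex.I_sq

lemma quad_sector {X : Matrix (Fin n) (Fin n) ℂ} {α : ℝ} (hX : numRange X ⊆ sector α)
    (x : Fin n → ℂ) :
    0 ≤ (star x ⬝ᵥ X.mulVec x).re ∧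
      |(star x ⬝ᵥ X.mulVec x).im| ≤ Real.tan α * (star x ⬝ᵥ X.mulVec x).re := by
  by_cases h0 : ∑ i, Complex.normSq (x i) = 0
  · rw [vec_zero_of_normSq h0]
    simp
  · have hpos : 0 < ∑ i, Complex.normSq (x i) :=
      lt_of_le_of_ne (Finset.sum_nonneg fun i _ => Complex.normSq_nonneg _) (Ne.symm h0)
    set s := ∑ i, Complex.normSq (x i) with hs
    set r := Real.sqrt s with hr
    have hrpos : 0 < r := Real.sqrt_pos.mpr hpos
    set u : Fin n → ℂ := ((r⁻¹ : ℝ) : ℂ) • x with hu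
    have hsum : ∑ i, Complex.normSq (u i) = 1 := by
      have h1 : ∀ i, Complex.normSq (u i) = r⁻¹ ^ 2 * Complex.normSq (x i) := by
        intro i
        simp [hu, Complex.normSq_mul, Complex.normSq_ofReal, sq]
      rw [Finset.sum_congr rfl fun i _ => h1 i, ← Finset.mul_sum, ← hs,
        inv_pow, Real.sq_sqrt hpos.le, inv_mul_cancel₀ h0]
    have hmem : (star u ⬝ᵥ X.mulVec u) ∈ numRange X := by
      rw [numRange_eq]; exact ⟨u, hsum, rfl⟩
    obtain ⟨hre, him⟩ := hX hmem
    have hx_eq : x = (r : ℂ) • u := by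
      rw [hu, smul_smul, ← Complex.ofReal_mul, mul_inv_cancel₀ hrpos.ne']
      simp
    have hq : star x ⬝ᵥ X.mulVec x = ((r^2 : ℝ) : ℂ) * (star u ⬝ᵥ X.mulVec u) := by
      rw [hx_eq, quad_smul]
      congr 1
      simp [Complex.conj_ofReal, sq, Complex.ofReal_mul]
    set z := star u ⬝ᵥ X.mulVec u
    have hre2 : (star x ⬝ᵥ X.mulVec x).re = r^2 * z.re := by
      rw [hq, Complex.mul_re]; simp [← Complex.ofReal_pow]
    have him2 : (star x ⬝ᵥ X.mulVec x).im = r^2 * z.im := by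
      rw [hq, Complex.mul_im]; simp [← Complex.ofReal_pow]
    constructor
    · rw [hre2]; positivity
    · rw [hre2, him2, abs_mul, _root_.abs_of_nonneg (sq_nonneg r)]
      calc r^2 * |z.im| ≤ r^2 * (Real.tan α * z.re) :=
            mul_le_mul_of_nonneg_left him (sq_nonneg r)
        _ = Real.tan α * (r^2 * z.re) := by ring

lemma diag_mem {X : Matrix (Fin n) (Fin n) ℂ} (i : Fin n) : X i i ∈ numRange X := by
  rw [numRange_eq]
  refine ⟨Pi.single i 1, ?_, ?_⟩
  · rw [Finset.sum_eq_single i]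
    · simp
    · intro j _ hj; simp [Pi.single_apply, hj]
    · simp
  · rw [quad_expand, Finset.sum_eq_single i]
    · rw [Finset.sum_eq_single i] <;> simp [Pi.single_apply]
      intro j hj; simp [hj]
    · intro j _ hj; simp [Pi.single_apply, hj]
    · simp

lemma diag_re_le (X : Matrix (Fin n) (Fin n) ℂ) (i : Fin n) :
    (X i i).re ≤ numRadius X := by
  refine le_trans (Complex.re_le_norm _) ?_
  exact le_csSup (bddAbove_range X) ⟨X i i, diag_mem i, rfl⟩

lemma reM_herm (X : Matrix (Fin n) (Fin n) ℂ) : (reM X).IsHermitian := by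
  show (reM X)ᴴ = reM X
  ext i j
  simp only [reM, Matrix.conjTranspose_apply, Matrix.smul_apply, Matrix.add_apply,
    smul_eq_mul, star_mul', star_add, Complex.star_def, Complex.conj_conj, map_add]
  rw [map_div₀, _root_.map_one, Complex.conj_ofNat]
  ring

lemma imM_herm (X : Matrix (Fin n) (Fin n) ℂ) : (imM X).IsHermitian := by
  show (imM X)ᴴ = imM X
  ext i j
  simp only [imM, Matrix.conjTranspose_apply, Matrix.smul_apply, Matrix.sub_apply,
    smul_eq_mul, star_mul', star_sub, Complex.star_def, Complex.conj_conj, map_sub, map_div₀,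
    map_neg, Complex.conj_I, map_ofNat]
  ring

lemma ofReal_smul_herm {M : Matrix (Fin n) (Fin n) ℂ} (hM : M.IsHermitian) (t : ℝ) :
    (((t : ℂ)) • M).IsHermitian := by
  show _ᴴ = _
  rw [Matrix.conjTranspose_smul, hM.eq]
  congr 1
  simp [Complex.star_def, Complex.conj_ofReal]

lemma reM_diag (X : Matrix (Fin n) (Fin n) ℂ) (i : Fin n) :
    reM X i i = (((X i i).re : ℝ) : ℂ) := by
  simp only [reM, Matrix.smul_apply, Matrix.add_apply, Matrix.conjTranspose_apply,
    Complex.star_def, smul_eq_mul]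
  rw [Complex.add_conj]
  push_cast
  ring

lemma imM_diag (X : Matrix (Fin n) (Fin n) ℂ) (i : Fin n) :
    imM X i i = (((X i i).im : ℝ) : ℂ) := by
  simp only [imM, Matrix.smul_apply, Matrix.sub_apply, Matrix.conjTranspose_apply,
    Complex.star_def, smul_eq_mul]
  rw [Complex.sub_conj]
  push_cast
  linear_combination (-((X i i).im : ℂ)) * Complex.I_sq

lemma psd_reM {X : Matrix (Fin n) (Fin n) ℂ} {α : ℝ} (hX : numRange X ⊆ sector α) :
    (reM X).PosSemidef := by
  refine Matrix.posSemidef_iff_dotProduct_mulVec.mpr ⟨reM_herm X, fun x => ?_⟩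
  rw [quad_reM, Complex.zero_le_real]
  exact (quad_sector hX x).1

lemma psd_A {X : Matrix (Fin n) (Fin n) ℂ} {α : ℝ} (hX : numRange X ⊆ sector α) :
    (((Real.tan α : ℝ) : ℂ) • reM X + imM X).PosSemidef := by
  refine Matrix.posSemidef_iff_dotProduct_mulVec.mpr ⟨(ofReal_smul_herm (reM_herm X) _).add (imM_herm X), fun x => ?_⟩
  rw [quad_madd, quad_msmul, quad_reM, quad_imM, ← Complex.ofReal_mul, ← Complex.ofReal_add,
    Complex.zero_le_real]
  obtain ⟨h1, h2⟩ := quad_sector hX x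
  have := (abs_le.mp h2).1
  linarith

lemma psd_B {X : Matrix (Fin n) (Fin n) ℂ} {α : ℝ} (hX : numRange X ⊆ sector α) :
    (((Real.tan α : ℝ) : ℂ) • reM X - imM X).PosSemidef := by
  refine Matrix.posSemidef_iff_dotProduct_mulVec.mpr ⟨(ofReal_smul_herm (reM_herm X) _).sub (imM_herm X), fun x => ?_⟩
  rw [quad_msub, quad_msmul, quad_reM, quad_imM, ← Complex.ofReal_mul, ← Complex.ofReal_sub,
    Complex.zero_le_real]
  obtain ⟨h1, h2⟩ := quad_sector hX x
  have := (abs_le.mp h2).2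
  linarith

end NRaux

open NRaux

theorem numRadius_hadamard_le_one_add_tan {n : ℕ} (X Y : Matrix (Fin n) (Fin n) ℂ)
    (α : ℝ) (hα : α ∈ Set.Ico 0 (Real.pi / 2))
    (hX : numRange X ⊆ sector α) (hY : numRange Y ⊆ sector α) :
    numRadius (X ⊙ Y) ≤ (1 + Real.tan α) * numRadius X * numRadius Y := by
  have ht : 0 ≤ Real.tan α :=
    Real.tan_nonneg_of_nonneg_of_le_pi_div_two hα.1 hα.2.le
  set t := Real.tan α with hta
  have hwX := numRadius_nonneg X
  have hwY := numRadius_nonneg Y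
  apply Real.sSup_le _ (by positivity)
  rintro ρ ⟨z, hz, rfl⟩
  rw [numRange_eq] at hz
  obtain ⟨x, hx, rfl⟩ := hz
  set A : Matrix (Fin n) (Fin n) ℂ := ((t : ℝ) : ℂ) • reM X + imM X with hA
  set B : Matrix (Fin n) (Fin n) ℂ := ((t : ℝ) : ℂ) • reM X - imM X with hB
  have hdec : X ⊙ Y = reM X ⊙ Y + (Complex.I/2) • (A ⊙ Y) + (-(Complex.I/2)) • (B ⊙ Y) := by
    ext i j
    simp only [hA, hB, Matrix.hadamard_apply, Matrix.add_apply, Matrix.smul_apply,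
      Matrix.sub_apply, reM, imM, smul_eq_mul, Matrix.conjTranspose_apply, Complex.star_def]
    linear_combination ((X i j - (starRingEnd ℂ) (X j i))/2 * Y i j) * Complex.I_sq
  rw [hdec, quad_madd, quad_madd, quad_msmul, quad_msmul]
  set q1 := star x ⬝ᵥ (reM X ⊙ Y).mulVec x
  set q2 := star x ⬝ᵥ (A ⊙ Y).mulVec x
  set q3 := star x ⬝ᵥ (B ⊙ Y).mulVec x
  have htri : ‖q1 + Complex.I/2 * q2 + -(Complex.I/2) * q3‖
      ≤ ‖q1‖ + (1/2) * ‖q2‖ + (1/2) * ‖q3‖ := by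
    have e2 : ‖Complex.I/2 * q2‖ = (1/2) * ‖q2‖ := by
      rw [norm_mul, norm_div, Complex.norm_I, Complex.norm_two]
    have e3 : ‖-(Complex.I/2) * q3‖ = (1/2) * ‖q3‖ := by
      rw [norm_mul, norm_neg, norm_div, Complex.norm_I, Complex.norm_two]
    calc ‖q1 + Complex.I/2 * q2 + -(Complex.I/2) * q3‖
        ≤ ‖q1 + Complex.I/2 * q2‖ + ‖-(Complex.I/2) * q3‖ :=
          norm_add_le _ _
      _ ≤ ‖q1‖ + ‖Complex.I/2 * q2‖ + ‖-(Complex.I/2) * q3‖ :=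
          add_le_add_left (norm_add_le _ _) _
      _ = _ := by rw [e2, e3]
  refine htri.trans ?_
  set d : Fin n → ℝ := fun i => (X i i).re with hd
  have hdiagR : ∀ i, (reM X i i).re = d i := fun i => by rw [reM_diag]; simp [hd]
  have hdiagA : ∀ i, (A i i).re = t * d i + (X i i).im := by
    intro i
    show (((t : ℝ) : ℂ) * reM X i i + imM X i i).re = _
    rw [reM_diag, imM_diag, ← Complex.ofReal_mul, ← Complex.ofReal_add, Complex.ofReal_re]
  have hdiagB : ∀ i, (B i i).re = t * d i - (X i i).im := by
    intro i
    show (((t : ℝ) : ℂ) * reM X i i - imM X i i).re = _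
    rw [reM_diag, imM_diag, ← Complex.ofReal_mul, ← Complex.ofReal_sub, Complex.ofReal_re]
  have h1 : ‖q1‖ ≤ numRadius Y * ∑ i, d i * Complex.normSq (x i) := by
    have := abs_quad_hadamard_le (psd_reM hX) Y x
    simpa only [hdiagR] using this
  have h2 : ‖q2‖ ≤ numRadius Y * ∑ i, (t * d i + (X i i).im) * Complex.normSq (x i) := by
    have := abs_quad_hadamard_le (psd_A hX) Y x
    rw [← hta] at this
    rw [← hA] at this
    simpa only [hdiagA] using this
  have h3 : ‖q3‖ ≤ numRadius Y * ∑ i, (t * d i - (X i i).im) * Complex.normSq (x i) := by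
    have := abs_quad_hadamard_le (psd_B hX) Y x
    rw [← hta] at this
    rw [← hB] at this
    simpa only [hdiagB] using this
  have hsum : (∑ i, (t * d i + (X i i).im) * Complex.normSq (x i)) + (∑ i, (t * d i - (X i i).im) * Complex.normSq (x i))
      = 2 * t * ∑ i, d i * Complex.normSq (x i) := by
    rw [← Finset.sum_add_distrib, Finset.mul_sum]
    exact Finset.sum_congr rfl fun i _ => by ring
  have hSR_nonneg : 0 ≤ ∑ i, d i * Complex.normSq (x i) := by
    apply Finset.sum_nonneg
    intro i _
    exact mul_nonneg (hX (diag_mem i)).1.le (Complex.normSq_nonneg _)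
  have hSR_le : ∑ i, d i * Complex.normSq (x i) ≤ numRadius X := by
    calc ∑ i, d i * Complex.normSq (x i) ≤ ∑ i, numRadius X * Complex.normSq (x i) :=
          Finset.sum_le_sum fun i _ =>
            mul_le_mul_of_nonneg_right (diag_re_le X i) (Complex.normSq_nonneg _)
      _ = numRadius X * ∑ i, Complex.normSq (x i) := (Finset.mul_sum _ _ _).symm
      _ = numRadius X := by rw [hx, mul_one]
  have hmain : numRadius Y * (∑ i, d i * Complex.normSq (x i))
        + (1/2) * (numRadius Y * ∑ i, (t * d i + (X i i).im) * Complex.normSq (x i))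
        + (1/2) * (numRadius Y * ∑ i, (t * d i - (X i i).im) * Complex.normSq (x i))
      = (1 + t) * numRadius Y * ∑ i, d i * Complex.normSq (x i) := by
    have := congrArg (fun u => numRadius Y * u) hsum
    simp only [mul_add] at this
    nlinarith [this]
  have hfinal : (1 + t) * numRadius Y * (∑ i, d i * Complex.normSq (x i)) ≤ (1 + t) * numRadius X * numRadius Y := by
    calc (1 + t) * numRadius Y * (∑ i, d i * Complex.normSq (x i))
        ≤ (1 + t) * numRadius Y * numRadius X :=
          mul_le_mul_of_nonneg_left hSR_le (by positivity)
      _ = (1 + t) * numRadius X * numRadius Y := by ring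
  calc ‖q1‖ + (1/2) * ‖q2‖ + (1/2) * ‖q3‖
      ≤ numRadius Y * (∑ i, d i * Complex.normSq (x i))
        + (1/2) * (numRadius Y * ∑ i, (t * d i + (X i i).im) * Complex.normSq (x i))
        + (1/2) * (numRadius Y * ∑ i, (t * d i - (X i i).im) * Complex.normSq (x i)) := by
        gcongr
    _ = (1 + t) * numRadius Y * ∑ i, d i * Complex.normSq (x i) := hmain
    _ ≤ (1 + t) * numRadius X * numRadius Y := hfinal
end

section
/- If X_1, ..., X_m ∈ M_n(ℂ) are accretive-dissipative, then ω(X_1 ∘ X_2 ∘ ⋯ ∘ X_m) ≤ 2^{m/2} ∏_{j=1}^m ω(X_j), where ∘ denotes the Hadamard product. -/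
open Matrix Complex
open scoped ComplexOrder

namespace AccDissAux

open scoped Matrix.Norms.L2Operator MatrixOrder

variable {n : ℕ}

/-- A function `Fin n → ℂ` regarded as an element of Euclidean space. -/
noncomputable def en {n : ℕ} (v : Fin n → ℂ) : EuclideanSpace ℂ (Fin n) :=
  (WithLp.equiv 2 (Fin n → ℂ)).symm v

@[simp] lemma en_apply (v : Fin n → ℂ) (i : Fin n) : en v i = v i := rfl

lemma en_coe (x : EuclideanSpace ℂ (Fin n)) : en (x : Fin n → ℂ) = x := rfl

lemma opNorm_eq (A : Matrix (Fin n) (Fin n) ℂ) : opNorm A = ‖A‖ :=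
  (Matrix.cstar_norm_def A).symm

lemma opNorm_nonneg (A : Matrix (Fin n) (Fin n) ℂ) : 0 ≤ opNorm A := norm_nonneg _

lemma en_norm_sq (v : Fin n → ℂ) : ‖en v‖ ^ 2 = ∑ i, ‖v i‖ ^ 2 := by
  rw [EuclideanSpace.norm_eq, Real.sq_sqrt (by positivity)]
  simp

lemma mulVec_norm_le (A : Matrix (Fin n) (Fin n) ℂ) (v : Fin n → ℂ) :
    ‖en (A *ᵥ v)‖ ≤ opNorm A * ‖en v‖ := by
  rw [opNorm_eq]
  exact A.l2_opNorm_mulVec (en v)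

lemma inner_en (v w : Fin n → ℂ) : (inner ℂ (en v) (en w) : ℂ) = star v ⬝ᵥ w :=
  (EuclideanSpace.inner_eq_star_dotProduct (en v) (en w)).trans (dotProduct_comm _ _)

/-- The bilinear bound from the operator norm. -/
lemma abs_dot_le (A : Matrix (Fin n) (Fin n) ℂ) (v y : Fin n → ℂ) :
    ‖star y ⬝ᵥ A *ᵥ v‖ ≤ opNorm A * ‖en v‖ * ‖en y‖ := by
  have h1 : star y ⬝ᵥ A *ᵥ v = (inner ℂ (en y) (en (A *ᵥ v)) : ℂ) := (inner_en y (A *ᵥ v)).symm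
  rw [h1]
  calc ‖(inner ℂ (en y) (en (A *ᵥ v)) : ℂ)‖ ≤ ‖en y‖ * ‖en (A *ᵥ v)‖ := norm_inner_le_norm _ _
    _ ≤ ‖en y‖ * (opNorm A * ‖en v‖) := by
        exact mul_le_mul_of_nonneg_left (mulVec_norm_le A v) (norm_nonneg _)
    _ = opNorm A * ‖en v‖ * ‖en y‖ := by ring

/-- The operator norm from a bilinear bound. -/
lemma opNorm_le_of_bilinear (A : Matrix (Fin n) (Fin n) ℂ) (c : ℝ) (hc : 0 ≤ c)
    (h : ∀ v y : Fin n → ℂ, ‖star y ⬝ᵥ A *ᵥ v‖ ≤ c * ‖en v‖ * ‖en y‖) :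
    opNorm A ≤ c := by
  refine ContinuousLinearMap.opNorm_le_bound _ hc ?_
  intro x
  set T := Matrix.toEuclideanCLM (𝕜 := ℂ) A
  have hTx : T x = en (A *ᵥ (x : Fin n → ℂ)) := rfl
  have key : ‖T x‖ ^ 2 ≤ (c * ‖x‖) * ‖T x‖ := by
    have h2 : ((‖T x‖ : ℂ)) ^ 2 = inner ℂ (T x) (T x) := (inner_self_eq_norm_sq_to_K (T x)).symm
    have h3 : (inner ℂ (T x) (T x) : ℂ) = star ((T x : Fin n → ℂ)) ⬝ᵥ A *ᵥ (x : Fin n → ℂ) := by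
      rw [hTx]; exact inner_en _ _
    have h4 : ‖(‖T x‖ : ℂ) ^ 2‖ ≤ c * ‖en (x : Fin n → ℂ)‖ * ‖en (T x : Fin n → ℂ)‖ := by
      rw [h2, h3]; exact h _ _
    have h5 : ‖(‖T x‖ : ℂ) ^ 2‖ = ‖T x‖ ^ 2 := by
      rw [← Complex.ofReal_pow, Complex.norm_real, Real.norm_eq_abs]
      exact abs_of_nonneg (by positivity)
    rw [h5] at h4
    calc ‖T x‖ ^ 2 ≤ c * ‖en (x : Fin n → ℂ)‖ * ‖en ((T x : Fin n → ℂ))‖ := h4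
      _ = (c * ‖x‖) * ‖T x‖ := by rw [en_coe, en_coe]
  rcases eq_or_lt_of_le (norm_nonneg (T x)) with h0 | h0
  · rw [← h0]; positivity
  · nlinarith [key, h0]

/-- Row sum of squares bounded by operator norm squared. -/
lemma col_sq_le (A : Matrix (Fin n) (Fin n) ℂ) (k : Fin n) :
    ∑ i, ‖A i k‖ ^ 2 ≤ opNorm A ^ 2 := by
  have h := mulVec_norm_le A (Pi.single k 1 : Fin n → ℂ)
  have h1 : ‖en ((Pi.single k 1 : Fin n → ℂ))‖ = 1 := by
    have := en_norm_sq ((Pi.single k 1 : Fin n → ℂ))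
    have h2 : ∑ i, ‖(Pi.single k 1 : Fin n → ℂ) i‖ ^ 2 = 1 := by
      rw [Finset.sum_eq_single k]
      · simp
      · intro b _ hb; simp [Pi.single_eq_of_ne hb]
      · simp
    nlinarith [norm_nonneg (en ((Pi.single k 1 : Fin n → ℂ)))]
  rw [h1, mul_one] at h
  calc ∑ i, ‖A i k‖ ^ 2 = ‖en (A *ᵥ Pi.single k 1)‖ ^ 2 := by
        rw [en_norm_sq, Matrix.mulVec_single]; simp
    _ ≤ opNorm A ^ 2 := by nlinarith [norm_nonneg (en (A *ᵥ (Pi.single k 1 : Fin n → ℂ)))]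

lemma opNorm_conjTranspose (A : Matrix (Fin n) (Fin n) ℂ) : opNorm Aᴴ = opNorm A := by
  rw [opNorm_eq, opNorm_eq, Matrix.l2_opNorm_conjTranspose]

lemma row_sq_le (A : Matrix (Fin n) (Fin n) ℂ) (i : Fin n) :
    ∑ k, ‖A i k‖ ^ 2 ≤ opNorm A ^ 2 := by
  have h := col_sq_le Aᴴ i
  rw [opNorm_conjTranspose] at h
  simpa [Matrix.conjTranspose_apply] using h

/-- Operator norm of a Hadamard (entrywise) product. -/
lemma opNorm_hadamard (A B : Matrix (Fin n) (Fin n) ℂ) :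
    opNorm (Matrix.of fun i k => A i k * B i k) ≤ opNorm A * opNorm B := by
  refine opNorm_le_of_bilinear _ _ (mul_nonneg (opNorm_nonneg A) (opNorm_nonneg B)) ?_
  intro v y
  have expand : star y ⬝ᵥ (Matrix.of fun i k => A i k * B i k) *ᵥ v
      = ∑ p : Fin n × Fin n, (star (y p.1) * A p.1 p.2) * (B p.1 p.2 * v p.2) := by
    rw [Fintype.sum_prod_type]
    simp only [dotProduct, Matrix.mulVec, Matrix.of_apply, Pi.star_apply,
      Finset.mul_sum]
    congr 1; ext i; congr 1; ext k; ring
  rw [expand]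
  calc ‖∑ p : Fin n × Fin n, (star (y p.1) * A p.1 p.2) * (B p.1 p.2 * v p.2)‖
      ≤ ∑ p : Fin n × Fin n, ‖(star (y p.1) * A p.1 p.2) * (B p.1 p.2 * v p.2)‖ := by
        exact norm_sum_le _ _
    _ = ∑ p : Fin n × Fin n, (‖y p.1‖ * ‖A p.1 p.2‖)
          * (‖B p.1 p.2‖ * ‖v p.2‖) := by
        refine Finset.sum_congr rfl fun p _ => ?_
        simp only [norm_mul, Complex.star_def, Complex.norm_conj]
    _ ≤ Real.sqrt (∑ p : Fin n × Fin n, (‖y p.1‖ * ‖A p.1 p.2‖) ^ 2)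
          * Real.sqrt (∑ p : Fin n × Fin n, (‖B p.1 p.2‖ * ‖v p.2‖) ^ 2) :=
        Real.sum_mul_le_sqrt_mul_sqrt _ _ _
    _ ≤ Real.sqrt (opNorm A ^ 2 * ‖en y‖ ^ 2) * Real.sqrt (opNorm B ^ 2 * ‖en v‖ ^ 2) := by
        refine mul_le_mul (Real.sqrt_le_sqrt ?_) (Real.sqrt_le_sqrt ?_)
          (Real.sqrt_nonneg _) (Real.sqrt_nonneg _)
        · rw [Fintype.sum_prod_type]
          calc ∑ i, ∑ k, (‖y i‖ * ‖A i k‖) ^ 2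
              = ∑ i, ‖y i‖ ^ 2 * ∑ k, ‖A i k‖ ^ 2 := by
                refine Finset.sum_congr rfl fun i _ => ?_
                rw [Finset.mul_sum]
                refine Finset.sum_congr rfl fun k _ => by ring
            _ ≤ ∑ i, ‖y i‖ ^ 2 * opNorm A ^ 2 := by
                refine Finset.sum_le_sum fun i _ => ?_
                exact mul_le_mul_of_nonneg_left (row_sq_le A i) (by positivity)
            _ = opNorm A ^ 2 * ‖en y‖ ^ 2 := by
                rw [en_norm_sq, ← Finset.sum_mul]; ring
        · rw [Fintype.sum_prod_type]
          calc ∑ i, ∑ k, (‖B i k‖ * ‖v k‖) ^ 2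
              = ∑ k, ‖v k‖ ^ 2 * ∑ i, ‖B i k‖ ^ 2 := by
                rw [Finset.sum_comm]
                refine Finset.sum_congr rfl fun k _ => ?_
                rw [Finset.mul_sum]
                refine Finset.sum_congr rfl fun i _ => by ring
            _ ≤ ∑ k, ‖v k‖ ^ 2 * opNorm B ^ 2 := by
                refine Finset.sum_le_sum fun k _ => ?_
                exact mul_le_mul_of_nonneg_left (col_sq_le B k) (by positivity)
            _ = opNorm B ^ 2 * ‖en v‖ ^ 2 := by
                rw [en_norm_sq, ← Finset.sum_mul]; ring
    _ = opNorm A * opNorm B * ‖en v‖ * ‖en y‖ := by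
        rw [Real.sqrt_mul (by positivity), Real.sqrt_mul (by positivity),
          Real.sqrt_sq (opNorm_nonneg A), Real.sqrt_sq (opNorm_nonneg B),
          Real.sqrt_sq (norm_nonneg _), Real.sqrt_sq (norm_nonneg _)]
        ring

/-- Operator norm of an iterated Hadamard product over a nonempty finset. -/
lemma opNorm_prod_le {m : ℕ} (X : Fin m → Matrix (Fin n) (Fin n) ℂ)
    {s : Finset (Fin m)} (hs : s.Nonempty) :
    opNorm (Matrix.of fun i k => ∏ j ∈ s, X j i k) ≤ ∏ j ∈ s, opNorm (X j) := by
  induction hs using Finset.Nonempty.cons_induction with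
  | singleton a => simp only [Finset.prod_singleton]; exact le_rfl
  | cons a s ha hs ih =>
    rw [Finset.prod_cons]
    have heq : (Matrix.of fun i k => ∏ j ∈ Finset.cons a s ha, X j i k)
        = Matrix.of fun i k => (X a) i k * (Matrix.of fun i k => ∏ j ∈ s, X j i k) i k := by
      ext i k; simp only [Matrix.of_apply, Finset.prod_cons]
    rw [heq]
    calc opNorm (Matrix.of fun i k => (X a) i k * (Matrix.of fun i k => ∏ j ∈ s, X j i k) i k)
        ≤ opNorm (X a) * opNorm (Matrix.of fun i k => ∏ j ∈ s, X j i k) :=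
          opNorm_hadamard _ _
      _ ≤ opNorm (X a) * ∏ j ∈ s, opNorm (X j) :=
          mul_le_mul_of_nonneg_left ih (opNorm_nonneg _)

lemma numRadius_nonneg (A : Matrix (Fin n) (Fin n) ℂ) : 0 ≤ numRadius A := by
  apply Real.sSup_nonneg
  rintro t ⟨z, _, rfl⟩
  exact norm_nonneg z

lemma bddAbove_numRange (A : Matrix (Fin n) (Fin n) ℂ) :
    BddAbove ((fun z : ℂ => ‖z‖) '' numRange A) := by
  refine ⟨opNorm A, ?_⟩
  rintro t ⟨z, ⟨x, hx, rfl⟩, rfl⟩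
  have h := abs_dot_le A (x : Fin n → ℂ) (x : Fin n → ℂ)
  rw [en_coe, hx] at h
  simpa using h

lemma numRadius_le_opNorm (A : Matrix (Fin n) (Fin n) ℂ) : numRadius A ≤ opNorm A := by
  refine Real.sSup_le ?_ (opNorm_nonneg A)
  rintro t ⟨z, ⟨x, hx, rfl⟩, rfl⟩
  have h := abs_dot_le A (x : Fin n → ℂ) (x : Fin n → ℂ)
  rw [en_coe, hx] at h
  simpa using h

lemma abs_quad_le (A : Matrix (Fin n) (Fin n) ℂ) (v : Fin n → ℂ) :
    ‖star v ⬝ᵥ A *ᵥ v‖ ≤ numRadius A * ‖en v‖ ^ 2 := by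
  rcases eq_or_ne (‖en v‖) 0 with h0 | h0
  · have hv : en v = 0 := norm_eq_zero.mp h0
    have hv' : v = 0 := by
      funext i
      show v i = 0
      rw [← en_apply v i, hv]
      rfl
    rw [hv']
    have hz : star (0 : Fin n → ℂ) ⬝ᵥ A *ᵥ (0 : Fin n → ℂ) = 0 := by simp
    rw [hz, norm_zero]
    exact mul_nonneg (numRadius_nonneg A) (sq_nonneg _)
  · set c : ℂ := ((‖en v‖⁻¹ : ℝ) : ℂ) with hc
    set u : Fin n → ℂ := c • v with hudef
    have hcabs : ‖c‖ = ‖en v‖⁻¹ := by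
      rw [hc, Complex.norm_real, Real.norm_eq_abs, _root_.abs_of_nonneg (by positivity)]
    have henu : en u = c • en v := rfl
    have hu : ‖en u‖ = 1 := by
      rw [henu, norm_smul]
      simp only [hcabs]
      field_simp
    have mem : ‖star u ⬝ᵥ A *ᵥ u‖ ≤ numRadius A := by
      refine le_csSup (bddAbove_numRange A) ?_
      exact ⟨_, ⟨en u, hu, rfl⟩, rfl⟩
    have hrel : star u ⬝ᵥ A *ᵥ u = star c * c * (star v ⬝ᵥ A *ᵥ v) := by
      rw [hudef, star_smul, Matrix.mulVec_smul, smul_dotProduct, dotProduct_smul]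
      simp only [smul_eq_mul, Pi.smul_apply]
      ring
    have habs : ‖star u ⬝ᵥ A *ᵥ u‖
        = ‖en v‖⁻¹ * ‖en v‖⁻¹ * ‖star v ⬝ᵥ A *ᵥ v‖ := by
      rw [hrel, norm_mul, norm_mul, Complex.star_def, Complex.norm_conj, hcabs]
    rw [habs] at mem
    have hpos : (0:ℝ) < ‖en v‖ := lt_of_le_of_ne (norm_nonneg _) (Ne.symm h0)
    have := mul_le_mul_of_nonneg_left mem (by positivity : (0:ℝ) ≤ ‖en v‖ ^ 2)
    calc ‖star v ⬝ᵥ A *ᵥ v‖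
        = ‖en v‖ ^ 2 * (‖en v‖⁻¹ * ‖en v‖⁻¹ * ‖star v ⬝ᵥ A *ᵥ v‖) := by
          field_simp
      _ ≤ ‖en v‖ ^ 2 * numRadius A := this
      _ = numRadius A * ‖en v‖ ^ 2 := by ring

lemma psd_abs_dot_le {H : Matrix (Fin n) (Fin n) ℂ} (hH : H.PosSemidef) (v y : Fin n → ℂ) :
    ‖star y ⬝ᵥ H *ᵥ v‖ ≤
      Real.sqrt ((star v ⬝ᵥ H *ᵥ v).re) * Real.sqrt ((star y ⬝ᵥ H *ᵥ y).re) := by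
  set S := CFC.sqrt H with hSdef
  have hS : Sᴴ = S := (CFC.sqrt_nonneg H).isSelfAdjoint
  have key : ∀ p q : Fin n → ℂ, star p ⬝ᵥ H *ᵥ q = star (S *ᵥ p) ⬝ᵥ (S *ᵥ q) := by
    intro p q
    conv_rhs => rw [Matrix.star_mulVec, Matrix.dotProduct_mulVec, Matrix.vecMul_vecMul, hS,
      CFC.sqrt_mul_sqrt_self H (Matrix.nonneg_iff_posSemidef.mpr hH)]
    rw [Matrix.dotProduct_mulVec]
  have hnorm : ∀ p : Fin n → ℂ, ‖en (S *ᵥ p)‖ ^ 2 = (star p ⬝ᵥ H *ᵥ p).re := by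
    intro p
    have h1 : (inner ℂ (en (S *ᵥ p)) (en (S *ᵥ p)) : ℂ) = star p ⬝ᵥ H *ᵥ p := by
      rw [inner_en, ← key p p]
    have h2 : (inner ℂ (en (S *ᵥ p)) (en (S *ᵥ p)) : ℂ) = ((‖en (S *ᵥ p)‖ : ℂ)) ^ 2 :=
      inner_self_eq_norm_sq_to_K _
    rw [← h1, h2, ← Complex.ofReal_pow, Complex.ofReal_re]
  calc ‖star y ⬝ᵥ H *ᵥ v‖
      = ‖(inner ℂ (en (S *ᵥ y)) (en (S *ᵥ v)) : ℂ)‖ := by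
        rw [key y v, ← inner_en]
    _ ≤ ‖en (S *ᵥ y)‖ * ‖en (S *ᵥ v)‖ := norm_inner_le_norm _ _
    _ = Real.sqrt ((star v ⬝ᵥ H *ᵥ v).re) * Real.sqrt ((star y ⬝ᵥ H *ᵥ y).re) := by
        rw [← hnorm v, ← hnorm y, Real.sqrt_sq (norm_nonneg _), Real.sqrt_sq (norm_nonneg _)]
        ring

lemma quad_decomp (A : Matrix (Fin n) (Fin n) ℂ) (y v : Fin n → ℂ) :
    star y ⬝ᵥ A *ᵥ v = star y ⬝ᵥ reM A *ᵥ v + Complex.I * (star y ⬝ᵥ imM A *ᵥ v) := by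
  have hA : reM A + Complex.I • imM A = A := by
    ext i k
    simp only [reM, imM, Matrix.add_apply, Matrix.smul_apply, Matrix.sub_apply,
      Matrix.conjTranspose_apply, smul_eq_mul]
    ring_nf
    simp [Complex.I_sq]
    ring
  conv_lhs => rw [← hA]
  rw [Matrix.add_mulVec, Matrix.smul_mulVec, dotProduct_add,
    dotProduct_smul, smul_eq_mul]

lemma sqrt_add_cs {a b c d : ℝ} (ha : 0 ≤ a) (hb : 0 ≤ b) (hc : 0 ≤ c) (hd : 0 ≤ d) :
    Real.sqrt a * Real.sqrt c + Real.sqrt b * Real.sqrt d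
      ≤ Real.sqrt (a + b) * Real.sqrt (c + d) := by
  rw [← Real.sqrt_mul ha, ← Real.sqrt_mul hb, ← Real.sqrt_mul (by positivity)]
  have e1 : Real.sqrt (a*c) * Real.sqrt (b*d) = Real.sqrt (a*d) * Real.sqrt (b*c) := by
    rw [← Real.sqrt_mul (by positivity), ← Real.sqrt_mul (by positivity)]
    ring_nf
  have e2 : 2 * (Real.sqrt (a*d) * Real.sqrt (b*c)) ≤ a*d + b*c := by
    nlinarith [sq_nonneg (Real.sqrt (a*d) - Real.sqrt (b*c)),
      Real.sq_sqrt (mul_nonneg ha hd), Real.sq_sqrt (mul_nonneg hb hc)]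
  have h3 : (Real.sqrt (a*c) + Real.sqrt (b*d))^2 ≤ (a+b)*(c+d) := by
    have s1 := Real.sq_sqrt (mul_nonneg ha hc)
    have s2 := Real.sq_sqrt (mul_nonneg hb hd)
    nlinarith [e1, e2, Real.sqrt_nonneg (a*c), Real.sqrt_nonneg (b*d)]
  exact (Real.le_sqrt (by positivity) (by positivity)).mpr h3

lemma opNorm_le_sqrt_two_mul_numRadius (A : Matrix (Fin n) (Fin n) ℂ)
    (h1 : (reM A).PosDef) (h2 : (imM A).PosDef) :
    opNorm A ≤ Real.sqrt 2 * numRadius A := by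
  have hH := h1.posSemidef
  have hK := h2.posSemidef
  have hω : 0 ≤ numRadius A := numRadius_nonneg A
  set a : (Fin n → ℂ) → ℝ := fun v => (star v ⬝ᵥ reM A *ᵥ v).re with hadef
  set b : (Fin n → ℂ) → ℝ := fun v => (star v ⬝ᵥ imM A *ᵥ v).re with hbdef
  have ha0 : ∀ v, 0 ≤ a v := by
    intro v
    have := (Complex.le_def.mp (hH.dotProduct_mulVec_nonneg v)).1
    simpa using this
  have hb0 : ∀ v, 0 ≤ b v := by
    intro v
    have := (Complex.le_def.mp (hK.dotProduct_mulVec_nonneg v)).1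
    simpa using this
  have haeq : ∀ v, (star v ⬝ᵥ reM A *ᵥ v) = ((a v : ℝ) : ℂ) := by
    intro v
    have him := (Complex.le_def.mp (hH.dotProduct_mulVec_nonneg v)).2
    apply Complex.ext
    · simp [hadef]
    · simp [← him]
  have hbeq : ∀ v, (star v ⬝ᵥ imM A *ᵥ v) = ((b v : ℝ) : ℂ) := by
    intro v
    have him := (Complex.le_def.mp (hK.dotProduct_mulVec_nonneg v)).2
    apply Complex.ext
    · simp [hbdef]
    · simp [← him]
  have hab : ∀ v, a v + b v ≤ Real.sqrt 2 * numRadius A * ‖en v‖ ^ 2 := by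
    intro v
    have hz := abs_quad_le A v
    have hzdef : star v ⬝ᵥ A *ᵥ v = ((a v : ℝ) : ℂ) + Complex.I * ((b v : ℝ) : ℂ) := by
      rw [quad_decomp A v v, haeq v, hbeq v]
    have habs : ‖star v ⬝ᵥ A *ᵥ v‖ = Real.sqrt ((a v)^2 + (b v)^2) := by
      rw [hzdef, Complex.norm_def, Complex.normSq_apply]
      simp [pow_two]
    have key : a v + b v ≤ Real.sqrt 2 * Real.sqrt ((a v)^2 + (b v)^2) := by
      rw [← Real.sqrt_mul (by norm_num)]
      refine (Real.le_sqrt (add_nonneg (ha0 v) (hb0 v)) (by positivity)).mpr ?_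
      nlinarith [sq_nonneg (a v - b v)]
    calc a v + b v ≤ Real.sqrt 2 * Real.sqrt ((a v)^2 + (b v)^2) := key
      _ = Real.sqrt 2 * ‖star v ⬝ᵥ A *ᵥ v‖ := by rw [habs]
      _ ≤ Real.sqrt 2 * (numRadius A * ‖en v‖ ^ 2) :=
          mul_le_mul_of_nonneg_left hz (Real.sqrt_nonneg 2)
      _ = Real.sqrt 2 * numRadius A * ‖en v‖ ^ 2 := by ring
  refine opNorm_le_of_bilinear _ _ (by positivity) ?_
  intro v y
  calc ‖star y ⬝ᵥ A *ᵥ v‖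
      ≤ ‖star y ⬝ᵥ reM A *ᵥ v‖ + ‖star y ⬝ᵥ imM A *ᵥ v‖ := by
        rw [quad_decomp A y v]
        refine le_trans (norm_add_le _ _) ?_
        simp
    _ ≤ Real.sqrt (a v) * Real.sqrt (a y) + Real.sqrt (b v) * Real.sqrt (b y) :=
        add_le_add (psd_abs_dot_le hH v y) (psd_abs_dot_le hK v y)
    _ ≤ Real.sqrt (a v + b v) * Real.sqrt (a y + b y) :=
        sqrt_add_cs (ha0 v) (hb0 v) (ha0 y) (hb0 y)
    _ ≤ Real.sqrt (Real.sqrt 2 * numRadius A * ‖en v‖ ^ 2)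
          * Real.sqrt (Real.sqrt 2 * numRadius A * ‖en y‖ ^ 2) := by
        exact mul_le_mul (Real.sqrt_le_sqrt (hab v)) (Real.sqrt_le_sqrt (hab y))
          (Real.sqrt_nonneg _) (Real.sqrt_nonneg _)
    _ = Real.sqrt 2 * numRadius A * ‖en v‖ * ‖en y‖ := by
        rw [Real.sqrt_mul (by positivity) (‖en v‖ ^ 2),
          Real.sqrt_mul (by positivity) (‖en y‖ ^ 2),
          Real.sqrt_sq (norm_nonneg _), Real.sqrt_sq (norm_nonneg _)]
        have hs : Real.sqrt (Real.sqrt 2 * numRadius A) * Real.sqrt (Real.sqrt 2 * numRadius A)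
            = Real.sqrt 2 * numRadius A := Real.mul_self_sqrt (by positivity)
        calc Real.sqrt (Real.sqrt 2 * numRadius A) * ‖en v‖
              * (Real.sqrt (Real.sqrt 2 * numRadius A) * ‖en y‖)
            = Real.sqrt (Real.sqrt 2 * numRadius A) * Real.sqrt (Real.sqrt 2 * numRadius A)
              * ‖en v‖ * ‖en y‖ := by ring
          _ = Real.sqrt 2 * numRadius A * ‖en v‖ * ‖en y‖ := by rw [hs]

end AccDissAux

theorem numRadius_hadamard_prod_le_of_accretiveDissipative {n m : ℕ} (hm : 0 < m)
    (X : Fin m → Matrix (Fin n) (Fin n) ℂ)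
    (h₁ : ∀ j, (reM (X j)).PosDef) (h₂ : ∀ j, (imM (X j)).PosDef) :
    numRadius (Matrix.of fun i k => ∏ j : Fin m, X j i k) ≤
      (2 : ℝ) ^ ((m : ℝ) / 2) * ∏ j : Fin m, numRadius (X j) := by
  have hne : (Finset.univ : Finset (Fin m)).Nonempty := ⟨⟨0, hm⟩, Finset.mem_univ _⟩
  have h3 : ∀ j, opNorm (X j) ≤ Real.sqrt 2 * numRadius (X j) := fun j =>
    AccDissAux.opNorm_le_sqrt_two_mul_numRadius (X j) (h₁ j) (h₂ j)
  have hpow : (2 : ℝ) ^ ((m : ℝ) / 2) = Real.sqrt 2 ^ m := by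
    rw [Real.sqrt_eq_rpow, ← Real.rpow_natCast ((2:ℝ) ^ ((1:ℝ)/2)) m,
      ← Real.rpow_mul (by norm_num : (0:ℝ) ≤ 2)]
    congr 1
    ring
  calc numRadius (Matrix.of fun i k => ∏ j : Fin m, X j i k)
      ≤ opNorm (Matrix.of fun i k => ∏ j : Fin m, X j i k) :=
        AccDissAux.numRadius_le_opNorm _
    _ ≤ ∏ j : Fin m, opNorm (X j) := AccDissAux.opNorm_prod_le X hne
    _ ≤ ∏ j : Fin m, (Real.sqrt 2 * numRadius (X j)) :=
        Finset.prod_le_prod (fun j _ => AccDissAux.opNorm_nonneg _) (fun j _ => h3 j)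
    _ = Real.sqrt 2 ^ m * ∏ j : Fin m, numRadius (X j) := by
        rw [Finset.prod_mul_distrib, Finset.prod_const, Finset.card_univ, Fintype.card_fin]
    _ = (2 : ℝ) ^ ((m : ℝ) / 2) * ∏ j : Fin m, numRadius (X j) := by rw [hpow]
end
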